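/- Every T-reflection morphism ζ: X → Y is a central extension, i.e. its kernel is contained in the center of X. -/
import Mathlib


/-- A symmetric system: a set with a multiplication satisfying (S1) and (S2). -/
structure SymmetricSystem (T : Type*) where
  mul : T → T → T
  s1 : ∀ s t : T, mul s (mul s t) = t
  s2 : ∀ r s t : T, mul r (mul s t) = mul (mul r s) (mul r t)

/-- A `T`-reflection group: a group `X` acting on `T` together with a map `t ↦ t^X`
satisfying axioms (G1)-(G4). -/
structure ReflectionGroup {T : Type*} (S : SymmetricSystem T) (X : Type*) [Group X] where
  act : X → T → T
  act_one : ∀ t : T, act 1 t = t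
  act_mul : ∀ x y : X, ∀ t : T, act (x * y) t = act x (act y t)
  refl : T → X
  g1 : Subgroup.closure (Set.range refl) = ⊤
  g2 : ∀ s t : T, act (refl t) s = S.mul t s
  g3 : ∀ s t : T, refl t * refl s * (refl t)⁻¹ = refl (S.mul t s)
  g4 : ∀ t : T, refl t * refl t = 1

lemma reflGroup_act_inv_act {T : Type*} {S : SymmetricSystem T} {X : Type*} [Group X]
    (R : ReflectionGroup S X) (x : X) (t : T) : R.act x⁻¹ (R.act x t) = t := by
  rw [← R.act_mul, inv_mul_cancel, R.act_one]

lemma reflGroup_conj {T : Type*} {S : SymmetricSystem T} {X : Type*} [Group X]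
    (R : ReflectionGroup S X) (x : X) (t : T) :
    x * R.refl t * x⁻¹ = R.refl (R.act x t) := by
  have hx : x ∈ Subgroup.closure (Set.range R.refl) := by rw [R.g1]; trivial
  induction hx using Subgroup.closure_induction generalizing t with
  | mem g hg =>
    obtain ⟨s, rfl⟩ := hg
    rw [R.g3, R.g2]
  | one => simp [R.act_one]
  | mul a b _ _ ha hb =>
    have : a * b * R.refl t * (a * b)⁻¹ = a * (b * R.refl t * b⁻¹) * a⁻¹ := by group
    rw [this, hb, ha, R.act_mul]
  | inv a _ ha =>
    have := ha (R.act a⁻¹ t)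
    rw [← R.act_mul, mul_inv_cancel, R.act_one] at this
    have h2 : a⁻¹ * (a * R.refl (R.act a⁻¹ t) * a⁻¹) * a = R.refl (R.act a⁻¹ t) := by group
    rw [this] at h2
    simpa using h2

lemma reflGroup_act_eq {T : Type*} {S : SymmetricSystem T} {X Y : Type*} [Group X] [Group Y]
    (RX : ReflectionGroup S X) (RY : ReflectionGroup S Y)
    (ζ : X →* Y) (hζ : ∀ t : T, ζ (RX.refl t) = RY.refl t) (x : X) (t : T) :
    RX.act x t = RY.act (ζ x) t := by
  have hx : x ∈ Subgroup.closure (Set.range RX.refl) := by rw [RX.g1]; trivial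
  induction hx using Subgroup.closure_induction generalizing t with
  | mem g hg =>
    obtain ⟨s, rfl⟩ := hg
    rw [RX.g2, hζ, RY.g2]
  | one => simp [RX.act_one, RY.act_one]
  | mul a b _ _ ha hb =>
    rw [RX.act_mul, map_mul, RY.act_mul, hb, ha]
  | inv a _ ha =>
    have h1 := ha (RX.act a⁻¹ t)
    rw [← RX.act_mul, mul_inv_cancel, RX.act_one] at h1
    have := congrArg (RY.act (ζ a)⁻¹) h1
    rw [← map_inv, ← RY.act_mul, ← map_mul, inv_mul_cancel, map_one, RY.act_one] at this
    exact this.symm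

/-- Every `T`-reflection morphism is a central extension: its kernel is central. -/
theorem reflectionMorphism_ker_le_center
    {T : Type*} (S : SymmetricSystem T) {X Y : Type*} [Group X] [Group Y]
    (RX : ReflectionGroup S X) (RY : ReflectionGroup S Y)
    (ζ : X →* Y) (hζ : ∀ t : T, ζ (RX.refl t) = RY.refl t) :
    ζ.ker ≤ Subgroup.center X := by
  intro x hx
  have hact : ∀ t : T, RX.act x t = t := by
    intro t
    rw [reflGroup_act_eq RX RY ζ hζ, hx, RY.act_one]
  have hcomm : ∀ t : T, x * RX.refl t = RX.refl t * x := by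
    intro t
    have := reflGroup_conj RX x t
    rw [hact t] at this
    calc x * RX.refl t = x * RX.refl t * x⁻¹ * x := by group
      _ = RX.refl t * x := by rw [this]
  rw [Subgroup.mem_center_iff]
  intro g
  have hg : g ∈ Subgroup.closure (Set.range RX.refl) := by rw [RX.g1]; trivial
  induction hg using Subgroup.closure_induction with
  | mem a ha => obtain ⟨s, rfl⟩ := ha; exact (hcomm s).symm
  | one => simp
  | mul a b _ _ ha hb => rw [mul_assoc, hb, ← mul_assoc, ha, mul_assoc]
  | inv a _ ha =>
    have : a⁻¹ * (a * x) * a⁻¹ = a⁻¹ * (x * a) * a⁻¹ := by rw [ha]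
    calc a⁻¹ * x = a⁻¹ * (x * a) * a⁻¹ := by group
      _ = x * a⁻¹ := by rw [← this]; group
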